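/- Let I ⊆ k[x_1,…,x_n] be an ideal and M ∈ ℚ^{r×n} (with ℚ^r carrying the lexicographic order ≻). Every nonzero h ∈ in_M(I) can be written as h = Σ_{i=1}^s in_M(f_i) for nonzero f_1,…,f_s ∈ I such that the initial forms in_M(f_1),…,in_M(f_s) are M-homogeneous of pairwise distinct degrees. -/

import Mathlib

open MvPolynomial

instance finWellFoundedLT {r : ℕ} : WellFoundedLT (Fin r) := Finite.to_wellFoundedLT

/-- The initial form of a polynomial with respect to a comparison `le` on exponent vectors:
the sum of the terms of `f` whose exponent is `le`-minimal in the support of `f`. -/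
noncomputable def initialForm {k : Type} [Field k] {n : ℕ}
    (le : (Fin n →₀ ℕ) → (Fin n →₀ ℕ) → Prop)
    (f : MvPolynomial (Fin n) k) : MvPolynomial (Fin n) k :=
  letI := Classical.decPred fun α : Fin n →₀ ℕ => ∀ β ∈ f.support, le α β
  ∑ α ∈ f.support.filter (fun α => ∀ β ∈ f.support, le α β),
    monomial α (MvPolynomial.coeff α f)

/-- The initial ideal of `I`: the ideal generated by initial forms of nonzero elements of `I`. -/
noncomputable def initialIdeal {k : Type} [Field k] {n : ℕ}
    (le : (Fin n →₀ ℕ) → (Fin n →₀ ℕ) → Prop)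
    (I : Ideal (MvPolynomial (Fin n) k)) : Ideal (MvPolynomial (Fin n) k) :=
  Ideal.span {g | ∃ f ∈ I, f ≠ 0 ∧ g = initialForm le f}

/-- The weight `Mα ∈ ℚ^r` of an exponent vector `α` under the weighting matrix `M`. -/
def mwt {n r : ℕ} (M : Matrix (Fin r) (Fin n) ℚ) (α : Fin n →₀ ℕ) : Fin r → ℚ :=
  fun i => ∑ j, M i j * (α j : ℚ)

/-- Comparison of exponents by `M`-weight, in the lexicographic order on `ℚ^r`. -/
def mLe {n r : ℕ} (M : Matrix (Fin r) (Fin n) ℚ) : (Fin n →₀ ℕ) → (Fin n →₀ ℕ) → Prop :=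
  fun α β => toLex (mwt M α) ≤ toLex (mwt M β)

section Aux

variable {k : Type} [Field k] {n r : ℕ}

/-- The `M`-homogeneous component of `f` of degree `d`. -/
noncomputable def homComp (M : Matrix (Fin r) (Fin n) ℚ) (d : Lex (Fin r → ℚ))
    (f : MvPolynomial (Fin n) k) : MvPolynomial (Fin n) k := by
  classical
  exact ∑ α ∈ f.support.filter (fun α => toLex (mwt M α) = d), monomial α (MvPolynomial.coeff α f)

lemma coeff_homComp (M : Matrix (Fin r) (Fin n) ℚ) (d : Lex (Fin r → ℚ))
    (f : MvPolynomial (Fin n) k) (β : Fin n →₀ ℕ) :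
    MvPolynomial.coeff β (homComp M d f) =
      if toLex (mwt M β) = d then MvPolynomial.coeff β f else 0 := by
  classical
  rw [homComp, coeff_sum]
  simp only [coeff_monomial]
  rw [Finset.sum_ite_eq']
  by_cases h1 : toLex (mwt M β) = d
  · by_cases h2 : MvPolynomial.coeff β f = 0
    · simp [Finset.mem_filter, mem_support_iff, h1, h2]
    · simp [Finset.mem_filter, mem_support_iff, h1, h2]
  · simp [Finset.mem_filter, h1]

lemma homComp_zero (M : Matrix (Fin r) (Fin n) ℚ) (d : Lex (Fin r → ℚ)) :
    homComp M d (0 : MvPolynomial (Fin n) k) = 0 := by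
  ext β
  simp [coeff_homComp]

lemma homComp_sum (M : Matrix (Fin r) (Fin n) ℚ) (d : Lex (Fin r → ℚ)) {ι : Type*}
    (s : Finset ι) (g : ι → MvPolynomial (Fin n) k) :
    homComp M d (∑ i ∈ s, g i) = ∑ i ∈ s, homComp M d (g i) := by
  ext β
  simp only [coeff_homComp, coeff_sum]
  split_ifs with h <;> simp

lemma support_homComp (M : Matrix (Fin r) (Fin n) ℚ) (d : Lex (Fin r → ℚ))
    (f : MvPolynomial (Fin n) k) :
    ∀ α ∈ (homComp M d f).support, toLex (mwt M α) = d := by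
  intro α hα
  by_contra hc
  exact mem_support_iff.mp hα (by rw [coeff_homComp, if_neg hc])

/-- `f` has an initial form of degree `d`. -/
def IsID (M : Matrix (Fin r) (Fin n) ℚ) (f : MvPolynomial (Fin n) k)
    (d : Lex (Fin r → ℚ)) : Prop :=
  homComp M d f ≠ 0 ∧ ∀ α ∈ f.support, d ≤ toLex (mwt M α)

lemma IsID.ne_zero {M : Matrix (Fin r) (Fin n) ℚ} {f : MvPolynomial (Fin n) k}
    {d : Lex (Fin r → ℚ)} (h : IsID M f d) : f ≠ 0 := by
  rintro rfl
  exact h.1 (homComp_zero M d)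

lemma initialForm_eq_homComp (M : Matrix (Fin r) (Fin n) ℚ) {f : MvPolynomial (Fin n) k}
    {d : Lex (Fin r → ℚ)} (hd : IsID M f d) :
    initialForm (mLe M) f = homComp M d f := by
  classical
  obtain ⟨h0, hle⟩ := hd
  obtain ⟨α₀, hα₀s, hα₀w⟩ : ∃ α ∈ f.support, toLex (mwt M α) = d := by
    by_contra hc
    push_neg at hc
    exact h0 (by rw [homComp, Finset.filter_false_of_mem hc, Finset.sum_empty])
  unfold initialForm homComp
  apply Finset.sum_congr _ (fun _ _ => rfl)
  refine Finset.ext fun α => ?_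
  simp only [Finset.mem_filter]
  refine and_congr_right fun hα => ?_
  constructor
  · intro hall
    exact le_antisymm (hα₀w ▸ hall α₀ hα₀s) (hle α hα)
  · intro heq β hβ
    show toLex (mwt M α) ≤ toLex (mwt M β)
    rw [heq]
    exact hle β hβ

lemma exists_isID (M : Matrix (Fin r) (Fin n) ℚ) {f : MvPolynomial (Fin n) k}
    (hf : f ≠ 0) : ∃ d, IsID M f d := by
  classical
  have hs : (f.support.image fun α => toLex (mwt M α)).Nonempty :=
    (Finset.image_nonempty).mpr (MvPolynomial.support_nonempty.mpr hf)
  refine ⟨Finset.min' _ hs, ?_, ?_⟩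
  · obtain ⟨α₀, hmem, hwt⟩ := Finset.mem_image.mp (Finset.min'_mem _ hs)
    intro h0
    have h1 := coeff_homComp M (Finset.min' _ hs) f α₀
    rw [h0, if_pos hwt] at h1
    exact mem_support_iff.mp hmem h1.symm
  · intro α hα
    exact Finset.min'_le _ _ (Finset.mem_image_of_mem _ hα)

lemma mwt_add (M : Matrix (Fin r) (Fin n) ℚ) (α β : Fin n →₀ ℕ) :
    mwt M (α + β) = mwt M α + mwt M β := by
  funext i
  simp [mwt, Finsupp.add_apply, Nat.cast_add, mul_add, Finset.sum_add_distrib]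

lemma homComp_monomial_mul (M : Matrix (Fin r) (Fin n) ℚ) (γ : Fin n →₀ ℕ) (c : k)
    (d : Lex (Fin r → ℚ)) (f : MvPolynomial (Fin n) k) :
    homComp M (toLex (mwt M γ) + d) (monomial γ c * f) = monomial γ c * homComp M d f := by
  classical
  ext β
  rw [coeff_homComp]
  by_cases hle : ∃ δ, β = γ + δ
  · obtain ⟨δ, rfl⟩ := hle
    rw [coeff_monomial_mul, coeff_monomial_mul, coeff_homComp]
    have hwt : toLex (mwt M (γ + δ)) = toLex (mwt M γ) + toLex (mwt M δ) := by
      rw [mwt_add, toLex_add]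
    by_cases h1 : toLex (mwt M δ) = d
    · rw [if_pos h1, if_pos (by rw [hwt, h1])]
    · rw [if_neg h1, mul_zero, if_neg]
      rw [hwt]
      intro hc
      exact h1 (add_left_cancel hc)
  · have hz : ∀ p : MvPolynomial (Fin n) k, MvPolynomial.coeff β (monomial γ c * p) = 0 := by
      intro p
      by_contra hc
      have hmem := MvPolynomial.support_mul _ _ (mem_support_iff.mpr hc)
      rw [Finset.mem_add] at hmem
      obtain ⟨y, hy, z, hz', hsum⟩ := hmem
      have hy' : y = γ := by
        rw [support_monomial] at hy
        split_ifs at hy with h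
        · simp at hy
        · simpa using hy
      exact hle ⟨z, by rw [← hsum, hy']⟩
    simp [hz]

lemma IsID.monomial_mul {M : Matrix (Fin r) (Fin n) ℚ} {γ : Fin n →₀ ℕ} {c : k}
    {f : MvPolynomial (Fin n) k} {d : Lex (Fin r → ℚ)} (hc : c ≠ 0) (h : IsID M f d) :
    IsID M (monomial γ c * f) (toLex (mwt M γ) + d) := by
  classical
  constructor
  · rw [homComp_monomial_mul]
    exact mul_ne_zero (fun hz => hc (by simpa using hz)) h.1
  · intro β hβ
    have hmem := MvPolynomial.support_mul _ _ hβ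
    rw [Finset.mem_add] at hmem
    obtain ⟨y, hy, z, hz', hsum⟩ := hmem
    have hy' : y = γ := by
      rw [support_monomial] at hy
      split_ifs at hy with hh
      · simp at hy
      · simpa using hy
    have : toLex (mwt M β) = toLex (mwt M γ) + toLex (mwt M z) := by
      rw [← toLex_add, ← mwt_add, ← hy', hsum]
    rw [this]
    exact add_le_add le_rfl (h.2 z hz')

/-- `h` admits a representation as a sum of initial forms of nonzero elements of `I`. -/
def GoodRep (M : Matrix (Fin r) (Fin n) ℚ) (I : Ideal (MvPolynomial (Fin n) k))
    (h : MvPolynomial (Fin n) k) : Prop :=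
  ∃ (s : ℕ) (f : Fin s → MvPolynomial (Fin n) k),
    (∀ i, f i ∈ I ∧ f i ≠ 0) ∧ h = ∑ i, initialForm (mLe M) (f i)

variable {M : Matrix (Fin r) (Fin n) ℚ} {I : Ideal (MvPolynomial (Fin n) k)}

lemma goodRep_zero : GoodRep M I 0 :=
  ⟨0, Fin.elim0, fun i => i.elim0, by simp⟩

lemma GoodRep.add {a b : MvPolynomial (Fin n) k} (ha : GoodRep M I a) (hb : GoodRep M I b) :
    GoodRep M I (a + b) := by
  obtain ⟨s, f, hf, rfl⟩ := ha
  obtain ⟨t, g, hg, rfl⟩ := hb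
  refine ⟨s + t, Fin.addCases f g, fun i => ?_, ?_⟩
  · refine Fin.addCases (fun j => ?_) (fun j => ?_) i
    · simpa using hf j
    · simpa using hg j
  · rw [Fin.sum_univ_add]
    simp

lemma goodRep_sum {ι : Type*} (s : Finset ι) (g : ι → MvPolynomial (Fin n) k)
    (hg : ∀ i ∈ s, GoodRep M I (g i)) : GoodRep M I (∑ i ∈ s, g i) := by
  classical
  induction s using Finset.induction with
  | empty => simpa using (goodRep_zero : GoodRep M I 0)
  | insert a s hnot ih =>
    rw [Finset.sum_insert hnot]
    exact (hg _ (Finset.mem_insert_self _ _)).add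
      (ih fun i hi => hg i (Finset.mem_insert_of_mem hi))

lemma GoodRep.monomial_mul {h : MvPolynomial (Fin n) k} (γ : Fin n →₀ ℕ) {c : k}
    (hc : c ≠ 0) (hh : GoodRep M I h) : GoodRep M I (monomial γ c * h) := by
  obtain ⟨s, f, hf, rfl⟩ := hh
  have hm : (monomial γ c : MvPolynomial (Fin n) k) ≠ 0 := fun hz => hc (by simpa using hz)
  refine ⟨s, fun i => monomial γ c * f i, fun i =>
    ⟨Ideal.mul_mem_left _ _ (hf i).1, mul_ne_zero hm (hf i).2⟩, ?_⟩
  rw [Finset.mul_sum]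
  refine Finset.sum_congr rfl fun i _ => ?_
  obtain ⟨d, hd⟩ := exists_isID M (hf i).2
  rw [initialForm_eq_homComp M hd, initialForm_eq_homComp M (hd.monomial_mul hc),
    homComp_monomial_mul]

lemma GoodRep.mul {h : MvPolynomial (Fin n) k} (p : MvPolynomial (Fin n) k)
    (hh : GoodRep M I h) : GoodRep M I (p * h) := by
  classical
  have : p * h = ∑ γ ∈ p.support, monomial γ (MvPolynomial.coeff γ p) * h := by
    rw [← Finset.sum_mul, ← as_sum]
  rw [this]
  exact goodRep_sum _ _ fun γ hγ => hh.monomial_mul γ (mem_support_iff.mp hγ)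

lemma goodRep_of_mem {h : MvPolynomial (Fin n) k} (hh : h ∈ initialIdeal (mLe M) I) :
    GoodRep M I h := by
  refine Submodule.span_induction ?_ goodRep_zero
    (fun x y _ _ hx hy => hx.add hy)
    (fun a x _ hx => by simpa [smul_eq_mul] using hx.mul a) hh
  rintro g ⟨f, hfI, hf0, rfl⟩
  exact ⟨1, fun _ => f, fun _ => ⟨hfI, hf0⟩, by simp⟩

lemma support_sum_mem {ι : Type*} {s : Finset ι} {g : ι → MvPolynomial (Fin n) k}
    {α : Fin n →₀ ℕ} (hα : α ∈ (∑ i ∈ s, g i).support) : ∃ i ∈ s, α ∈ (g i).support := by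
  by_contra hc
  push_neg at hc
  refine mem_support_iff.mp hα ?_
  rw [coeff_sum]
  exact Finset.sum_eq_zero fun i hi => notMem_support_iff.mp (hc i hi)

end Aux

/-- **Decomposition of elements of an initial ideal** (Lemma `initialformwrite`).
Any nonzero `h ∈ in_M(I)` can be written as a sum `Σ in_M(fᵢ)` with `fᵢ ∈ I` nonzero, where
the summands are `M`-homogeneous of pairwise distinct degrees. -/
theorem stmt_4 {k : Type} [Field k] {n r : ℕ}
    (I : Ideal (MvPolynomial (Fin n) k)) (M : Matrix (Fin r) (Fin n) ℚ)
    (h : MvPolynomial (Fin n) k) (hh : h ∈ initialIdeal (mLe M) I) (hne : h ≠ 0) :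
    ∃ (s : ℕ) (f : Fin s → MvPolynomial (Fin n) k) (deg : Fin s → Lex (Fin r → ℚ)),
      (∀ i, f i ∈ I ∧ f i ≠ 0) ∧
      h = ∑ i, initialForm (mLe M) (f i) ∧
      Function.Injective deg ∧
      (∀ i, ∀ α ∈ (initialForm (mLe M) (f i)).support, toLex (mwt M α) = deg i) := by
  classical
  obtain ⟨s, f, hf, hsum⟩ := goodRep_of_mem hh
  choose d hd using fun i => exists_isID M (hf i).2
  set F : Lex (Fin r → ℚ) → MvPolynomial (Fin n) k :=
    fun e => ∑ i ∈ Finset.univ.filter (fun i => d i = e), f i with hF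
  set D : Finset (Lex (Fin r → ℚ)) := Finset.univ.image d with hD
  set D' : Finset (Lex (Fin r → ℚ)) := D.filter (fun e => homComp M e (F e) ≠ 0) with hD'
  -- homComp e (F e) is the sum of the initial forms of f i over the fiber
  have hcomp : ∀ e, homComp M e (F e) =
      ∑ i ∈ Finset.univ.filter (fun i => d i = e), initialForm (mLe M) (f i) := by
    intro e
    rw [hF, homComp_sum]
    refine Finset.sum_congr rfl fun i hi => ?_
    have : d i = e := (Finset.mem_filter.mp hi).2
    rw [← this, (initialForm_eq_homComp M (hd i)).symm]
  -- the key sum identity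
  have hsum2 : h = ∑ e ∈ D', homComp M e (F e) := by
    rw [hD', Finset.sum_filter_ne_zero]
    rw [hsum, ← Finset.sum_fiberwise_of_maps_to (t := D) (g := d)
      (fun i _ => Finset.mem_image_of_mem d (Finset.mem_univ i))
      (fun i => initialForm (mLe M) (f i))]
    exact Finset.sum_congr rfl fun e _ => (hcomp e).symm
  -- facts about F e for e ∈ D'
  have hID : ∀ e ∈ D', IsID M (F e) e := by
    intro e he
    refine ⟨(Finset.mem_filter.mp he).2, ?_⟩
    intro α hα
    obtain ⟨i, hi, hαi⟩ := support_sum_mem hα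
    have hdi : d i = e := (Finset.mem_filter.mp hi).2
    rw [← hdi]
    exact (hd i).2 α hαi
  have hFI : ∀ e, F e ∈ I := fun e => Ideal.sum_mem _ fun i _ => (hf i).1
  -- reindex by Fin D'.card
  set σ := D'.equivFin with hσ
  refine ⟨D'.card, fun i => F ((σ.symm i) : Lex (Fin r → ℚ)), fun i => ((σ.symm i) : Lex (Fin r → ℚ)),
    fun i => ⟨hFI _, (hID _ (σ.symm i).2).ne_zero⟩, ?_, ?_, ?_⟩
  · rw [hsum2, ← Finset.sum_coe_sort D' (fun e => homComp M e (F e)),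
      ← Equiv.sum_comp σ.symm (fun x : {x // x ∈ D'} => homComp M (x : Lex (Fin r → ℚ)) (F x))]
    refine Finset.sum_congr rfl fun i _ => ?_
    rw [initialForm_eq_homComp M (hID _ (σ.symm i).2)]
  · intro i j hij
    exact σ.symm.injective (Subtype.ext hij)
  · intro i α hα
    rw [initialForm_eq_homComp M (hID _ (σ.symm i).2)] at hα
    exact support_homComp M _ _ α hα
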